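/- Let K be a field of characteristic p > 0, let V and W be nonzero finite-dimensional K-vector spaces, let g be a K-linear automorphism of V with g^p = 1 and (g - 1)^{p-1} \ne 0 (i.e., g has at least one Jordan block of size p), and let h be a K-linear automorphism of W with h^p = 1. Then the automorphism g \otimes h of V \otimes_K W satisfies: the K-dimension of the range of (g \otimes h - 1)^{p-1} is at least dim_K W. Equivalently, g \otimes h has at least dim_K W Jordan blocks of size p. -/

import Mathlib

open LinearMap TensorProduct

/-- If `g` is an automorphism of order dividing `p` of `V` (char `K = p`) having at
least one Jordan block of size `p` (i.e. `(g-1)^(p-1) ≠ 0`) and `h` is an automorphism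
of order dividing `p` of `W`, then `g ⊗ h` has at least `dim W` Jordan blocks of
size `p`: the rank of `(g ⊗ h - 1)^(p-1)` is at least `dim W`. -/
theorem tensor_numBlocks_ge_dim
    {K V W : Type*} [Field K] [AddCommGroup V] [Module K V] [AddCommGroup W] [Module K W]
    [FiniteDimensional K V] [FiniteDimensional K W] [Nontrivial V] [Nontrivial W]
    (p : ℕ) (hp : 0 < p) [CharP K p]
    (g : Module.End K V) (hg : g ^ p = 1) (hgblock : (g - 1) ^ (p - 1) ≠ 0)
    (h : Module.End K W) (hh : h ^ p = 1) :
    Module.finrank K (LinearMap.range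
        (((TensorProduct.map (g : V →ₗ[K] V) (h : W →ₗ[K] W)) - 1) ^ (p - 1)))
      ≥ Module.finrank K W := by
  classical
  have hpfact : Fact p.Prime :=
    ⟨(CharP.char_is_prime_or_zero K p).resolve_right hp.ne'⟩
  have hp1 : p - 1 + 1 = p := Nat.succ_pred_eq_of_pos hp
  set N : Module.End K V := g - 1 with hNdef
  set M : Module.End K W := h - 1 with hMdef
  haveI : CharP (Module.End K W) p :=
    charP_of_injective_algebraMap (algebraMap K (Module.End K W)).injective p
  have hMp : M ^ p = 0 := by
    rw [hMdef, sub_pow_char_of_commute _ (Commute.one_right h), hh, one_pow, sub_self]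
  have hcommhM : Commute h M := (Commute.refl h).sub_right (Commute.one_right h)
  -- a vector generating a size-p Jordan block and a dual functional detecting its top
  obtain ⟨v, hv⟩ : ∃ v, (N ^ (p - 1)) v ≠ 0 := by
    by_contra hc
    push_neg at hc
    exact hgblock (LinearMap.ext hc)
  obtain ⟨f0, hf0⟩ : ∃ f0 : Module.Dual K V, f0 ((N ^ (p - 1)) v) ≠ 0 := by
    by_contra hc
    push_neg at hc
    exact hv ((Module.forall_dual_apply_eq_zero_iff K _).mp hc)
  -- split the tensor endomorphism
  set A : Module.End K (V ⊗[K] W) := TensorProduct.map (N : V →ₗ[K] V) (h : W →ₗ[K] W) with hA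
  set B : Module.End K (V ⊗[K] W) := TensorProduct.map (1 : V →ₗ[K] V) (M : W →ₗ[K] W) with hB
  have hsplit : TensorProduct.map (g : V →ₗ[K] V) (h : W →ₗ[K] W) - 1 = A + B := by
    apply TensorProduct.ext'
    intro x y
    simp only [hA, hB, hNdef, hMdef, LinearMap.sub_apply, LinearMap.add_apply,
      TensorProduct.map_tmul, LinearMap.sub_apply, Module.End.one_apply,
      TensorProduct.sub_tmul, TensorProduct.tmul_sub]
    abel
  have hcomm : Commute A B := by
    show A * B = B * A
    rw [hA, hB, ← TensorProduct.map_mul, ← TensorProduct.map_mul, mul_one, one_mul,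
      hcommhM.eq]
  have hApow : ∀ k : ℕ, A ^ k = TensorProduct.map ((N ^ k : Module.End K V) : V →ₗ[K] V)
      ((h ^ k : Module.End K W) : W →ₗ[K] W) := fun k => TensorProduct.map_pow _ _ k
  have hBpow : ∀ k : ℕ, B ^ k = TensorProduct.map ((1 : Module.End K V) : V →ₗ[K] V)
      ((M ^ k : Module.End K W) : W →ₗ[K] W) := by
    intro k
    rw [hB, TensorProduct.map_pow, one_pow]
  -- the comparison endomorphism of W
  set S : Module.End K W :=
    ∑ k ∈ Finset.range p, (((p - 1).choose k : K) * f0 ((N ^ k) v)) • (h ^ k * M ^ (p - 1 - k))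
    with hS
  set ρ : V ⊗[K] W →ₗ[K] W :=
    (TensorProduct.lid K W).toLinearMap ∘ₗ TensorProduct.map f0 LinearMap.id with hρ
  set φ : W →ₗ[K] V ⊗[K] W :=
    (((TensorProduct.map (g : V →ₗ[K] V) (h : W →ₗ[K] W)) - 1) ^ (p - 1)).comp
      (TensorProduct.mk K V W v) with hφ
  have key : ρ ∘ₗ φ = S := by
    apply LinearMap.ext
    intro w
    simp only [hφ, LinearMap.comp_apply, TensorProduct.mk_apply]
    rw [hsplit, hcomm.add_pow, hp1, LinearMap.sum_apply, map_sum, hS, LinearMap.sum_apply]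
    apply Finset.sum_congr rfl
    intro k hk
    rw [Module.End.mul_apply, Module.End.mul_apply, Module.End.natCast_apply, map_nsmul,
      map_nsmul, map_nsmul, hApow, hBpow, TensorProduct.map_tmul, TensorProduct.map_tmul,
      Module.End.one_apply, hρ, LinearMap.comp_apply, TensorProduct.map_tmul,
      LinearMap.smul_apply, Module.End.mul_apply]
    simp only [LinearEquiv.coe_toLinearMap, TensorProduct.lid_tmul, LinearMap.id_coe, id_eq]
    rw [mul_smul, Nat.cast_smul_eq_nsmul]
  -- `S` is a unit : it is `f0 u • h^(p-1)` plus a nilpotent commuting part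
  have hhu : IsUnit h := by
    refine ⟨⟨h, h ^ (p - 1), ?_, ?_⟩, rfl⟩
    · rw [← pow_succ', hp1, hh]
    · rw [← pow_succ, hp1, hh]
  have hterm_comm : ∀ a b c d : ℕ, Commute (h ^ a * M ^ b) (h ^ c * M ^ d) := by
    intro a b c d
    exact (((Commute.refl h).pow_pow a c).mul_right ((hcommhM.pow_pow a d))).mul_left
      (((hcommhM.symm.pow_pow b c)).mul_right ((Commute.refl M).pow_pow b d))
  have hnilterm : ∀ k ∈ Finset.range (p - 1),
      IsNilpotent ((((p - 1).choose k : K) * f0 ((N ^ k) v)) • (h ^ k * M ^ (p - 1 - k))) := by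
    intro k hk
    rw [Finset.mem_range] at hk
    have hj : 1 ≤ p - 1 - k := by omega
    have hMnil : IsNilpotent (M ^ (p - 1 - k)) := by
      refine ⟨p, ?_⟩
      rw [← pow_mul]
      obtain ⟨j', hj'⟩ : ∃ j', p - 1 - k = j' + 1 := ⟨p - 1 - k - 1, by omega⟩
      rw [hj', add_mul, one_mul, pow_add, hMp, mul_zero]
    exact IsNilpotent.smul ((hcommhM.pow_pow k (p - 1 - k)).isNilpotent_mul_left hMnil) _
  have hSsplit : S = (∑ k ∈ Finset.range (p - 1),
      (((p - 1).choose k : K) * f0 ((N ^ k) v)) • (h ^ k * M ^ (p - 1 - k)))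
      + f0 ((N ^ (p - 1)) v) • h ^ (p - 1) := by
    rw [hS, ← hp1, Finset.sum_range_succ, hp1]
    congr 1
    rw [Nat.choose_self, Nat.cast_one, one_mul, Nat.sub_self, pow_zero, mul_one]
  have hSunit : IsUnit S := by
    rw [hSsplit]
    have hunit : IsUnit (f0 ((N ^ (p - 1)) v) • h ^ (p - 1)) := by
      rw [Algebra.smul_def]
      exact ((isUnit_iff_ne_zero.mpr hf0).map (algebraMap K (Module.End K W))).mul
        (hhu.pow _)
    have hnil : IsNilpotent (∑ k ∈ Finset.range (p - 1),
        (((p - 1).choose k : K) * f0 ((N ^ k) v)) • (h ^ k * M ^ (p - 1 - k))) := by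
      apply Commute.isNilpotent_sum hnilterm
      intro i j _ _
      exact ((hterm_comm i (p-1-i) j (p-1-j)).smul_left _).smul_right _
    apply IsNilpotent.isUnit_add_right_of_commute hnil hunit
    apply Commute.sum_left
    intro i _
    have : Commute (h ^ i * M ^ (p - 1 - i)) (h ^ (p - 1)) :=
      (((Commute.refl h).pow_pow i (p - 1)).mul_left (hcommhM.symm.pow_pow _ _))
    exact (this.smul_left _).smul_right _
  have hinj : Function.Injective φ := by
    have hinj2 : Function.Injective (ρ ∘ₗ φ) := by
      rw [key]
      exact ((Module.End.isUnit_iff S).mp hSunit).injective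
    rw [LinearMap.coe_comp] at hinj2
    exact Function.Injective.of_comp hinj2
  calc Module.finrank K W
      = Module.finrank K (LinearMap.range φ) := (LinearMap.finrank_range_of_inj hinj).symm
    _ ≤ Module.finrank K (LinearMap.range
        (((TensorProduct.map (g : V →ₗ[K] V) (h : W →ₗ[K] W)) - 1) ^ (p - 1))) :=
        Submodule.finrank_mono (hφ ▸ LinearMap.range_comp_le_range _ _)
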